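/- Let n, m ∈ ℕ. There is a constant c = c(n, m) such that for every polynomial p of degree ≤ m with p(z) ≠ 0 for all |z| < 1, and for all r ∈ [0,1) and all integers k with 0 ≤ k < n, one has |(d^k/dz^k)(p(z)^n / p(rz))| ≤ c |p(0)|^{n-1} for all z in the open unit disc. -/

import Mathlib

open Polynomial Finset

/-- The family of numerator polynomials in the representation of the iterated
derivative of `p(z)^n / p(rz)`. -/
noncomputable def auxW (n : ℕ) (p q : Polynomial ℂ) : ℕ → ℕ → Polynomial ℂ
  | 0, i => if i = 0 then 1 else 0
  | (k+1), i =>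
      (((n : ℤ) - (k : ℤ) + (i : ℤ)) : ℂ) • (Polynomial.derivative p * auxW n p q k i)
        + p * Polynomial.derivative (auxW n p q k i)
        + (if i = 0 then 0 else (-(i : ℂ)) • (auxW n p q k (i - 1) * Polynomial.derivative q))

/-- coefficient bound predicate: degree at most `D` and `i`-th coefficient at
most `A / 2^i`. -/
def GoodP (A : ℝ) (D : ℕ) (T : Polynomial ℂ) : Prop :=
  T.natDegree ≤ D ∧ ∀ i : ℕ, ‖T.coeff i‖ ≤ A / 2 ^ i

/-- Constants in the bound of `auxW`. -/
noncomputable def Wc (n m : ℕ) : ℕ → ℝ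
  | 0 => 1
  | (k+1) => ((3*(n+k+1) + k*m + (k+1)) * ((k+1)*m+1) : ℕ) * Wc n m k

lemma Wc_nonneg (n m k : ℕ) : 0 ≤ Wc n m k := by
  induction k with
  | zero => norm_num [Wc]
  | succ k ih => unfold Wc; positivity

lemma GoodP.nonnegA {A : ℝ} {D : ℕ} {T : Polynomial ℂ} (h : GoodP A D T) : 0 ≤ A := by
  have := h.2 0
  simp only [pow_zero, div_one] at this
  exact le_trans (norm_nonneg _) this

lemma GoodP.mono {A B : ℝ} {D E : ℕ} {T : Polynomial ℂ} (h : GoodP A D T)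
    (hA : A ≤ B) (hD : D ≤ E) : GoodP B E T := by
  refine ⟨le_trans h.1 hD, fun i => le_trans (h.2 i) ?_⟩
  gcongr

lemma GoodP.zero {A : ℝ} (hA : 0 ≤ A) (D : ℕ) : GoodP A D (0 : Polynomial ℂ) := by
  refine ⟨by simp, fun i => by simp; positivity⟩

lemma GoodP.one : GoodP 1 0 (1 : Polynomial ℂ) := by
  refine ⟨by simp, fun i => ?_⟩
  rcases Nat.eq_zero_or_pos i with h | h
  · simp [h]
  · rw [Polynomial.coeff_one, if_neg (by omega : ¬ i = 0)]
    rw [norm_zero]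
    positivity

lemma GoodP.add {A B : ℝ} {D E : ℕ} {T S : Polynomial ℂ}
    (hT : GoodP A D T) (hS : GoodP B E S) : GoodP (A + B) (max D E) (T + S) := by
  constructor
  · exact le_trans (Polynomial.natDegree_add_le _ _) (max_le_max hT.1 hS.1)
  · intro i
    rw [Polynomial.coeff_add, add_div]
    exact le_trans (norm_add_le _ _) (add_le_add (hT.2 i) (hS.2 i))

lemma GoodP.smul {A : ℝ} {D : ℕ} {T : Polynomial ℂ} (hT : GoodP A D T) (c : ℂ) :
    GoodP (‖c‖ * A) D (c • T) := by
  constructor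
  · exact le_trans (Polynomial.natDegree_smul_le _ _) hT.1
  · intro i
    rw [Polynomial.coeff_smul, smul_eq_mul, norm_mul, mul_div_assoc]
    exact mul_le_mul_of_nonneg_left (hT.2 i) (norm_nonneg c)

lemma GoodP.deriv {A : ℝ} {D : ℕ} {T : Polynomial ℂ} (hT : GoodP A D T) :
    GoodP (D * A) D (Polynomial.derivative T) := by
  constructor
  · exact le_trans (Polynomial.natDegree_derivative_le _) (le_trans (Nat.sub_le _ _) hT.1)
  · intro i
    rw [Polynomial.coeff_derivative]
    rcases le_or_gt (i + 1) D with h | h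
    · rw [norm_mul]
      have h1 : ‖T.coeff (i+1)‖ ≤ A / 2 ^ (i+1) := hT.2 (i+1)
      have h2 : ‖((i : ℂ) + 1)‖ = (i + 1 : ℝ) := by
        have e1 : ((i:ℂ)+1) = ((i+1:ℕ):ℂ) := by push_cast; ring
        rw [e1, Complex.norm_natCast]
        push_cast; ring
      have hA : 0 ≤ A := hT.nonnegA
      calc ‖T.coeff (i+1)‖ * ‖((i:ℂ)+1)‖ ≤ (A / 2 ^ (i+1)) * (i+1 : ℝ) := by
            apply mul_le_mul (hT.2 (i+1)) (le_of_eq h2) (norm_nonneg _) (by positivity)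
        _ ≤ D * A / 2 ^ i := by
            have hiD : (i + 1 : ℝ) ≤ (D : ℝ) := by exact_mod_cast h
            have hp2 : (0:ℝ) < 2 ^ i := by positivity
            have hp2' : (0:ℝ) < 2 ^ (i+1) := by positivity
            rw [div_mul_eq_mul_div, div_le_div_iff₀ hp2' hp2]
            have h2pow : (2:ℝ) ^ (i+1) = 2 ^ i * 2 := pow_succ 2 i
            rw [h2pow]
            nlinarith [mul_nonneg hA (le_of_lt hp2)]
    · have : T.coeff (i+1) = 0 :=
        Polynomial.coeff_eq_zero_of_natDegree_lt (lt_of_le_of_lt hT.1 h)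
      rw [this]
      simp only [zero_mul, norm_zero]
      have hA : 0 ≤ A := hT.nonnegA
      positivity

lemma GoodP.mul {A B : ℝ} {D E : ℕ} {T S : Polynomial ℂ}
    (hT : GoodP A D T) (hS : GoodP B E S) : GoodP ((D + E + 1) * (A * B)) (D + E) (T * S) := by
  have hA : 0 ≤ A := hT.nonnegA
  have hB : 0 ≤ B := hS.nonnegA
  constructor
  · exact le_trans (Polynomial.natDegree_mul_le) (add_le_add hT.1 hS.1)
  · intro i
    rcases le_or_gt i (D + E) with h | h
    · rw [Polynomial.coeff_mul]
      calc ‖∑ x ∈ Finset.HasAntidiagonal.antidiagonal i, T.coeff x.1 * S.coeff x.2‖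
          ≤ ∑ x ∈ Finset.HasAntidiagonal.antidiagonal i, ‖T.coeff x.1 * S.coeff x.2‖ := norm_sum_le _ _
        _ ≤ ∑ x ∈ Finset.HasAntidiagonal.antidiagonal i, A * B / 2 ^ i := by
            apply Finset.sum_le_sum
            rintro ⟨a, b⟩ hx
            rw [Finset.HasAntidiagonal.mem_antidiagonal] at hx
            rw [norm_mul]
            calc ‖T.coeff a‖ * ‖S.coeff b‖ ≤ (A / 2^a) * (B / 2^b) :=
                mul_le_mul (hT.2 a) (hS.2 b) (norm_nonneg _) (by positivity)
              _ = A * B / 2 ^ i := by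
                  rw [div_mul_div_comm, ← pow_add, hx]
        _ = (i + 1 : ℝ) * (A * B / 2 ^ i) := by
            rw [Finset.sum_const, Finset.Nat.card_antidiagonal, nsmul_eq_mul]
            push_cast; ring
        _ ≤ (D + E + 1) * (A * B) / 2 ^ i := by
            have hi : (i : ℝ) + 1 ≤ (D : ℝ) + E + 1 := by
              have : (i : ℝ) ≤ (D : ℝ) + E := by exact_mod_cast h
              linarith
            have hAB : (0:ℝ) ≤ A * B / 2 ^ i := by positivity
            calc (i + 1 : ℝ) * (A * B / 2 ^ i) ≤ ((D:ℝ) + E + 1) * (A * B / 2 ^ i) :=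
                  mul_le_mul_of_nonneg_right hi hAB
              _ = ((D:ℝ) + E + 1) * (A * B) / 2 ^ i := by ring
    · have : (T * S).coeff i = 0 := by
        apply Polynomial.coeff_eq_zero_of_natDegree_lt
        exact lt_of_le_of_lt (le_trans Polynomial.natDegree_mul_le (add_le_add hT.1 hS.1)) h
      rw [this, norm_zero]
      positivity

/-- evaluation bound on closed unit disc from `GoodP`. -/
lemma GoodP.eval_le {A : ℝ} {D : ℕ} {T : Polynomial ℂ} (hT : GoodP A D T)
    {z : ℂ} (hz : ‖z‖ ≤ 1) : ‖Polynomial.eval z T‖ ≤ 2 * A := by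
  rw [Polynomial.eval_eq_sum_range]
  calc ‖∑ i ∈ Finset.range (T.natDegree + 1), T.coeff i * z ^ i‖
      ≤ ∑ i ∈ Finset.range (T.natDegree + 1), ‖T.coeff i * z ^ i‖ := norm_sum_le _ _
    _ ≤ ∑ i ∈ Finset.range (T.natDegree + 1), A * (1/2) ^ i := by
        apply Finset.sum_le_sum
        intro i _
        rw [norm_mul, norm_pow]
        have hA : 0 ≤ A := hT.nonnegA
        calc ‖T.coeff i‖ * ‖z‖ ^ i ≤ (A / 2 ^ i) * 1 ^ i := by
              apply mul_le_mul (hT.2 i) (pow_le_pow_left₀ (norm_nonneg z) hz i)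
                (by positivity) (by positivity)
          _ = A * (1/2) ^ i := by
              rw [one_pow, mul_one, div_pow, one_pow]
              ring
    _ = A * ∑ i ∈ Finset.range (T.natDegree + 1), (1/2 : ℝ) ^ i := by
        rw [Finset.mul_sum]
    _ ≤ A * 2 := by
        apply mul_le_mul_of_nonneg_left (sum_geometric_two_le _) hT.nonnegA
    _ = 2 * A := mul_comm _ _

lemma auxW_eq_zero (n : ℕ) (p q : Polynomial ℂ) :
    ∀ k i, k < i → auxW n p q k i = 0 := by
  intro k
  induction k with
  | zero =>
    intro i hi
    have : i ≠ 0 := Nat.pos_iff_ne_zero.mp hi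
    simp [auxW, this]
  | succ k ih =>
    intro i hi
    have h1 : auxW n p q k i = 0 := ih i (lt_trans (Nat.lt_succ_self k) hi)
    have h2 : i ≠ 0 := by omega
    have h3 : auxW n p q k (i-1) = 0 := ih (i-1) (by omega)
    simp [auxW, h1, h2, h3]

section perpoint

variable {m : ℕ} {p : Polynomial ℂ}

/-- norm of a multiset product -/
lemma multiset_norm_prod (s : Multiset ℂ) : ‖s.prod‖ = (s.map (fun x => ‖x‖)).prod := by
  induction s using Multiset.induction with
  | empty => simp
  | cons a s ih => simp [norm_mul, ih]

lemma multiset_norm_sum (s : Multiset ℂ) : ‖s.sum‖ ≤ (s.map (fun x => ‖x‖)).sum := by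
  induction s using Multiset.induction with
  | empty => simp
  | cons a s ih =>
    simp only [Multiset.sum_cons, Multiset.map_cons]
    exact le_trans (norm_add_le _ _) (by gcongr)

/-- product over a sub-multiset whose entries are all ≥ 1 -/
lemma multiset_prod_le {t s : Multiset ℝ} (hts : t ≤ s) (h1 : ∀ x ∈ s, (1:ℝ) ≤ x) :
    t.prod ≤ s.prod := by
  obtain ⟨u, rfl⟩ := Multiset.le_iff_exists_add.mp hts
  rw [Multiset.prod_add]
  have key : ∀ v : Multiset ℝ, (∀ x ∈ v, (1:ℝ) ≤ x) → 1 ≤ v.prod := by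
    intro v
    induction v using Multiset.induction with
    | empty => simp
    | cons a v ih =>
      intro hv
      rw [Multiset.prod_cons]
      have ha : 1 ≤ a := hv a (Multiset.mem_cons_self a v)
      have hvp : 1 ≤ v.prod := ih fun x hx => hv x (Multiset.mem_cons_of_mem hx)
      nlinarith
  have h1t : (1:ℝ) ≤ t.prod := key t fun x hx => h1 x (Multiset.mem_add.mpr (Or.inl hx))
  have h1u : (1:ℝ) ≤ u.prod := key u fun x hx => h1 x (Multiset.mem_add.mpr (Or.inr hx))
  nlinarith

lemma roots_norm_ge (hp : ∀ z : ℂ, ‖z‖ < 1 → Polynomial.eval z p ≠ 0)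
    {a : ℂ} (ha : a ∈ p.roots) : 1 ≤ ‖a‖ := by
  by_contra h
  push_neg at h
  have hp0 : p ≠ 0 := fun h0 => hp 0 (by simp) (by simp [h0])
  exact hp a h (Polynomial.isRoot_of_mem_roots ha)

lemma eval_zero_norm (hp : ∀ z : ℂ, ‖z‖ < 1 → Polynomial.eval z p ≠ 0) :
    ‖Polynomial.eval 0 p‖ = ‖p.leadingCoeff‖ * ((p.roots).map (fun a => ‖a‖)).prod := by
  have hp0 : p ≠ 0 := fun h0 => hp 0 (by simp) (by simp [h0])
  conv_lhs => rw [(IsAlgClosed.splits p).eq_prod_roots]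
  rw [Polynomial.eval_mul, Polynomial.eval_C, norm_mul, Polynomial.eval_multiset_prod]
  congr 1
  rw [multiset_norm_prod, Multiset.map_map, Multiset.map_map]
  congr 1
  ext a
  simp

lemma multiset_prod_map_le {α : Type*} (s : Multiset α) (f g : α → ℝ)
    (h0 : ∀ a ∈ s, 0 ≤ f a) (hle : ∀ a ∈ s, f a ≤ g a) :
    (s.map f).prod ≤ (s.map g).prod := by
  induction s using Multiset.induction with
  | empty => simp
  | cons a s ih =>
    simp only [Multiset.map_cons, Multiset.prod_cons]
    have h0a : 0 ≤ f a := h0 a (Multiset.mem_cons_self a s)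
    have hga : f a ≤ g a := hle a (Multiset.mem_cons_self a s)
    have h0s : (0:ℝ) ≤ (s.map f).prod := by
      apply Multiset.prod_nonneg
      intro x hx
      obtain ⟨b, hb, rfl⟩ := Multiset.mem_map.mp hx
      exact h0 b (Multiset.mem_cons_of_mem hb)
    have ihs : (s.map f).prod ≤ (s.map g).prod :=
      ih (fun b hb => h0 b (Multiset.mem_cons_of_mem hb))
        (fun b hb => hle b (Multiset.mem_cons_of_mem hb))
    nlinarith

lemma eval_norm_eq (p : Polynomial ℂ) (w : ℂ) :
    ‖Polynomial.eval w p‖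
      = ‖p.leadingCoeff‖ * ((p.roots).map (fun a => ‖w - a‖)).prod := by
  conv_lhs => rw [(IsAlgClosed.splits p).eq_prod_roots]
  rw [Polynomial.eval_mul, Polynomial.eval_C, norm_mul, Polynomial.eval_multiset_prod]
  congr 1
  rw [multiset_norm_prod, Multiset.map_map, Multiset.map_map]
  congr 1
  ext a
  simp

lemma choose_le_two_pow (n k : ℕ) : n.choose k ≤ 2 ^ n := by
  rcases le_or_gt k n with h | h
  · calc n.choose k ≤ ∑ i ∈ Finset.range (n+1), n.choose i :=
        Finset.single_le_sum (fun i _ => Nat.zero_le _)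
          (Finset.mem_range.mpr (by omega))
      _ = 2 ^ n := Nat.sum_range_choose n
  · rw [Nat.choose_eq_zero_of_lt h]
    exact Nat.zero_le _

/-- coefficient bound via Vieta -/
lemma coeff_bound (hdeg : p.natDegree ≤ m)
    (hp : ∀ z : ℂ, ‖z‖ < 1 → Polynomial.eval z p ≠ 0) (i : ℕ) :
    ‖p.coeff i‖ ≤ 2 ^ m * ‖Polynomial.eval 0 p‖ := by
  have hp0 : p ≠ 0 := fun h0 => hp 0 (by simp) (by simp [h0])
  have hsplit : p.Splits := IsAlgClosed.splits p
  rcases le_or_gt i p.natDegree with h | h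
  · rw [Polynomial.coeff_eq_esymm_roots_of_splits hsplit h]
    set j := p.natDegree - i with hj
    rw [norm_mul, norm_mul, norm_pow, norm_neg, norm_one, one_pow, mul_one]
    rw [eval_zero_norm hp]
    rw [mul_comm ((2:ℝ)^m) _, mul_assoc]
    apply mul_le_mul_of_nonneg_left _ (norm_nonneg _)
    -- ‖esymm j‖ ≤ 2^m * prod of root norms
    have hn1 : ∀ a ∈ p.roots, (1:ℝ) ≤ ‖a‖ := fun a ha => roots_norm_ge hp ha
    unfold Multiset.esymm
    calc ‖((p.roots.powersetCard j).map Multiset.prod).sum‖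
        ≤ (((p.roots.powersetCard j).map Multiset.prod).map (fun x => ‖x‖)).sum :=
          multiset_norm_sum _
      _ ≤ Multiset.card (((p.roots.powersetCard j).map Multiset.prod).map (fun x => ‖x‖))
            • ((p.roots).map (fun a => ‖a‖)).prod := by
          apply Multiset.sum_le_card_nsmul
          intro x hx
          rw [Multiset.mem_map] at hx
          obtain ⟨y, hy, rfl⟩ := hx
          rw [Multiset.mem_map] at hy
          obtain ⟨t, ht, rfl⟩ := hy
          rw [Multiset.mem_powersetCard] at ht
          rw [multiset_norm_prod]
          apply multiset_prod_le (Multiset.map_le_map ht.1)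
          intro x hx
          obtain ⟨a, ha, rfl⟩ := Multiset.mem_map.mp hx
          exact hn1 a ha
      _ ≤ (2:ℝ)^m * ((p.roots).map (fun a => ‖a‖)).prod := by
          have hprod0 : (0:ℝ) ≤ ((p.roots).map (fun a => ‖a‖)).prod := by
            apply Multiset.prod_nonneg
            intro x hx
            obtain ⟨a, _, rfl⟩ := Multiset.mem_map.mp hx
            exact norm_nonneg a
          rw [nsmul_eq_mul]
          apply mul_le_mul_of_nonneg_right _ hprod0
          simp only [Multiset.card_map, Multiset.card_powersetCard]
          have hcard : Multiset.card p.roots ≤ m := le_trans (Polynomial.card_roots' p) hdeg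
          calc ((Multiset.card p.roots).choose j : ℝ)
              ≤ (2:ℝ)^(Multiset.card p.roots) := by
                exact_mod_cast choose_le_two_pow _ _
            _ ≤ (2:ℝ)^m := pow_le_pow_right₀ (by norm_num) hcard
      _ = ((p.roots).map (fun a => ‖a‖)).prod * (2:ℝ)^m := mul_comm _ _
  · rw [Polynomial.coeff_eq_zero_of_natDegree_lt h, norm_zero]
    positivity

/-- ratio bound: `‖p(z)‖ ≤ 2^m ‖p(rz)‖` for `‖z‖ < 1`. -/
lemma ratio_bound (hdeg : p.natDegree ≤ m)
    (hp : ∀ z : ℂ, ‖z‖ < 1 → Polynomial.eval z p ≠ 0)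
    {r : ℝ} (hr0 : 0 ≤ r) (hr1 : r < 1) {z : ℂ} (hz : ‖z‖ < 1) :
    ‖Polynomial.eval z p‖ ≤ 2 ^ m * ‖Polynomial.eval ((r:ℂ) * z) p‖ := by
  rw [eval_norm_eq, eval_norm_eq]
  rw [mul_comm ((2:ℝ)^m) _, mul_assoc]
  apply mul_le_mul_of_nonneg_left _ (norm_nonneg _)
  have key : ∀ a ∈ p.roots, ‖z - a‖ ≤ 2 * ‖(r:ℂ)*z - a‖ := by
    intro a ha
    have ha1 : (1:ℝ) ≤ ‖a‖ := roots_norm_ge hp ha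
    have h1 : ‖z - (r:ℂ)*z‖ = (1-r)*‖z‖ := by
      have : z - (r:ℂ)*z = ((1-r : ℝ):ℂ) * z := by push_cast; ring
      rw [this, norm_mul, Complex.norm_real, Real.norm_eq_abs, abs_of_nonneg (by linarith)]
    have h2 : ‖z - a‖ ≤ ‖z - (r:ℂ)*z‖ + ‖(r:ℂ)*z - a‖ := by
      calc ‖z - a‖ = ‖(z - (r:ℂ)*z) + ((r:ℂ)*z - a)‖ := by ring_nf
        _ ≤ _ := norm_add_le _ _
    have h3 : ‖a‖ - r*‖z‖ ≤ ‖(r:ℂ)*z - a‖ := by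
      have h := norm_sub_norm_le a ((r:ℂ)*z)
      rw [norm_sub_rev] at h
      rw [norm_mul, Complex.norm_real, Real.norm_eq_abs, abs_of_nonneg hr0] at h
      exact h
    have hz0 : 0 ≤ ‖z‖ := norm_nonneg z
    linarith
  calc (p.roots.map (fun a => ‖z - a‖)).prod
      ≤ (p.roots.map (fun a => 2 * ‖(r:ℂ)*z - a‖)).prod :=
        multiset_prod_map_le _ _ _ (fun a _ => norm_nonneg _) key
    _ = (p.roots.map (fun _ => (2:ℝ))).prod * (p.roots.map (fun a => ‖(r:ℂ)*z - a‖)).prod := by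
        rw [← Multiset.prod_map_mul]
    _ ≤ 2^m * (p.roots.map (fun a => ‖(r:ℂ)*z - a‖)).prod := by
        apply mul_le_mul_of_nonneg_right
        · rw [Multiset.map_const', Multiset.prod_replicate]
          apply pow_le_pow_right₀ (by norm_num)
          exact le_trans (Polynomial.card_roots' p) hdeg
        · apply Multiset.prod_nonneg
          intro x hx
          obtain ⟨a, _, rfl⟩ := Multiset.mem_map.mp hx
          exact norm_nonneg _
    _ = (p.roots.map (fun a => ‖(r:ℂ)*z - a‖)).prod * 2^m := mul_comm _ _

end perpoint

lemma coeff_comp_linear (p : Polynomial ℂ) (a : ℂ) (i : ℕ) :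
    (p.comp (Polynomial.C a * Polynomial.X)).coeff i = p.coeff i * a ^ i := by
  induction p using Polynomial.induction_on' with
  | add f g hf hg => simp [Polynomial.add_comp, hf, hg, add_mul]
  | monomial N b =>
    have h1 : (Polynomial.monomial N b).comp (Polynomial.C a * Polynomial.X)
        = Polynomial.C b * (Polynomial.C a * Polynomial.X)^N := by
      simp [← Polynomial.C_mul_X_pow_eq_monomial, Polynomial.mul_comp, Polynomial.pow_comp]
    rw [h1, mul_pow, ← Polynomial.C_pow, ← mul_assoc, mul_comm (Polynomial.C b) _, mul_assoc,
      Polynomial.coeff_C_mul, Polynomial.coeff_C_mul,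
      Polynomial.coeff_monomial, Polynomial.coeff_X_pow]
    by_cases h : i = N
    · subst h; simp [mul_comm]
    · rw [if_neg h, if_neg (fun hh => h hh.symm)]
      simp

lemma rep_lemma_q (n : ℕ) (p q : Polynomial ℂ)
    (hp : ∀ z : ℂ, ‖z‖ < 1 → Polynomial.eval z p ≠ 0)
    (hq : ∀ z : ℂ, ‖z‖ < 1 → Polynomial.eval z q ≠ 0) (k : ℕ) :
    ∀ z : ℂ, ‖z‖ < 1 →
      iteratedDeriv k (fun w : ℂ => (Polynomial.eval w p) ^ n / Polynomial.eval w q) z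
        = ∑ i ∈ Finset.range (k+1),
            (Polynomial.eval z p) ^ ((n : ℤ) - k + i) * Polynomial.eval z (auxW n p q k i) *
              (Polynomial.eval z q) ^ (-((i : ℤ) + 1)) := by
  induction k with
  | zero =>
    intro z hz
    rw [iteratedDeriv_zero, Finset.sum_range_one]
    have h1 : auxW n p q 0 0 = 1 := by simp [auxW]
    rw [h1, Polynomial.eval_one, mul_one]
    rw [show ((n : ℤ) - ((0:ℕ):ℤ) + ((0:ℕ):ℤ)) = (n : ℤ) by simp]
    rw [show (-(((0:ℕ):ℤ)+1)) = (-1 : ℤ) by simp]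
    rw [zpow_natCast, zpow_neg_one, div_eq_mul_inv]
  | succ k ih =>
    intro z hz
    have hPz : Polynomial.eval z p ≠ 0 := hp z hz
    have hQz : Polynomial.eval z q ≠ 0 := hq z hz
    rw [iteratedDeriv_succ]
    have hev : iteratedDeriv k (fun w : ℂ => (Polynomial.eval w p) ^ n / Polynomial.eval w q)
        =ᶠ[nhds z] (fun w => ∑ i ∈ Finset.range (k+1),
          (Polynomial.eval w p) ^ ((n : ℤ) - k + i) * Polynomial.eval w (auxW n p q k i) *
            (Polynomial.eval w q) ^ (-((i : ℤ) + 1))) := by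
      filter_upwards [Metric.isOpen_ball.mem_nhds (mem_ball_zero_iff.mpr hz)] with w hw
      exact ih w (mem_ball_zero_iff.mp hw)
    rw [hev.deriv_eq]
    have hder : HasDerivAt (fun w => ∑ i ∈ Finset.range (k+1),
        (Polynomial.eval w p) ^ ((n : ℤ) - k + i) * Polynomial.eval w (auxW n p q k i) *
          (Polynomial.eval w q) ^ (-((i : ℤ) + 1)))
        (∑ i ∈ Finset.range (k+1),
          ((((((n : ℤ) - k + i : ℤ)) : ℂ) * Polynomial.eval z p ^ ((n : ℤ) - k + i - 1) *
              Polynomial.eval z (Polynomial.derivative p) * Polynomial.eval z (auxW n p q k i)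
            + Polynomial.eval z p ^ ((n : ℤ) - k + i) *
                Polynomial.eval z (Polynomial.derivative (auxW n p q k i))) *
            Polynomial.eval z q ^ (-((i : ℤ) + 1))
          + Polynomial.eval z p ^ ((n : ℤ) - k + i) * Polynomial.eval z (auxW n p q k i) *
              ((((-((i : ℤ) + 1) : ℤ)) : ℂ) * Polynomial.eval z q ^ (-((i : ℤ) + 1) - 1) *
                Polynomial.eval z (Polynomial.derivative q)))) z := by
      refine HasDerivAt.fun_sum fun i _ => ?_
      have h1 : HasDerivAt (fun w => (Polynomial.eval w p) ^ ((n : ℤ) - k + i))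
          (((((n : ℤ) - k + i : ℤ)) : ℂ) * Polynomial.eval z p ^ ((n : ℤ) - k + i - 1) *
            Polynomial.eval z (Polynomial.derivative p)) z := by
        have := (hasDerivAt_zpow ((n : ℤ) - k + i) (Polynomial.eval z p)
          (Or.inl hPz)).comp z (Polynomial.hasDerivAt p z)
        exact this
      have h2 := Polynomial.hasDerivAt (auxW n p q k i) z
      have h3 : HasDerivAt (fun w => (Polynomial.eval w q) ^ (-((i : ℤ) + 1)))
          ((((-((i : ℤ) + 1) : ℤ)) : ℂ) * Polynomial.eval z q ^ (-((i : ℤ) + 1) - 1) *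
            Polynomial.eval z (Polynomial.derivative q)) z := by
        have := (hasDerivAt_zpow (-((i : ℤ) + 1)) (Polynomial.eval z q)
          (Or.inl hQz)).comp z (Polynomial.hasDerivAt q z)
        exact this
      exact (h1.mul h2).mul h3
    rw [hder.deriv]
    -- now pure algebra
    set G1 : ℕ → ℂ := fun i =>
      Polynomial.eval z p ^ ((n : ℤ) - (k+1 : ℕ) + i) *
        Polynomial.eval z
          ((((n : ℤ) - (k : ℤ) + (i : ℤ)) : ℂ) • (Polynomial.derivative p * auxW n p q k i)
            + p * Polynomial.derivative (auxW n p q k i)) *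
        Polynomial.eval z q ^ (-((i : ℤ) + 1)) with hG1
    set G2 : ℕ → ℂ := fun i =>
      Polynomial.eval z p ^ ((n : ℤ) - (k+1 : ℕ) + i) *
        Polynomial.eval z
          (if i = 0 then 0 else (-(i : ℂ)) • (auxW n p q k (i - 1) * Polynomial.derivative q)) *
        Polynomial.eval z q ^ (-((i : ℤ) + 1)) with hG2
    have hsplitF : ∀ i : ℕ,
        Polynomial.eval z p ^ ((n : ℤ) - (k+1 : ℕ) + i) *
          Polynomial.eval z (auxW n p q (k+1) i) *
          Polynomial.eval z q ^ (-((i : ℤ) + 1)) = G1 i + G2 i := by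
      intro i
      have hW : auxW n p q (k+1) i
          = ((((n : ℤ) - (k : ℤ) + (i : ℤ)) : ℂ) • (Polynomial.derivative p * auxW n p q k i)
              + p * Polynomial.derivative (auxW n p q k i))
            + (if i = 0 then 0
               else (-(i : ℂ)) • (auxW n p q k (i - 1) * Polynomial.derivative q)) := by
        simp [auxW]
      rw [hW, Polynomial.eval_add, hG1, hG2]
      ring
    have hG1top : G1 (k+1) = 0 := by
      have hz1 : auxW n p q k (k+1) = 0 := auxW_eq_zero n p q k (k+1) (Nat.lt_succ_self k)
      rw [hG1]
      simp [hz1]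
    have hG2zero : G2 0 = 0 := by
      rw [hG2]
      simp
    have key : ∀ i ∈ Finset.range (k+1),
        (((((n : ℤ) - k + i : ℤ) : ℂ) * Polynomial.eval z p ^ ((n : ℤ) - k + i - 1) *
            Polynomial.eval z (Polynomial.derivative p) * Polynomial.eval z (auxW n p q k i)
          + Polynomial.eval z p ^ ((n : ℤ) - k + i) *
              Polynomial.eval z (Polynomial.derivative (auxW n p q k i))) *
          Polynomial.eval z q ^ (-((i : ℤ) + 1))
        + Polynomial.eval z p ^ ((n : ℤ) - k + i) * Polynomial.eval z (auxW n p q k i) *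
            ((((-((i : ℤ) + 1) : ℤ)) : ℂ) * Polynomial.eval z q ^ (-((i : ℤ) + 1) - 1) *
              Polynomial.eval z (Polynomial.derivative q)))
        = G1 i + G2 (i+1) := by
      intro i _
      have he1 : (n : ℤ) - (k : ℤ) + (i : ℤ) - 1 = (n : ℤ) - ((k+1 : ℕ) : ℤ) + (i : ℤ) := by
        push_cast; ring
      have he2 : (n : ℤ) - (k : ℤ) + (i : ℤ) = ((n : ℤ) - ((k+1 : ℕ) : ℤ) + (i : ℤ)) + 1 := by
        push_cast; ring
      have he3 : (n : ℤ) - ((k+1 : ℕ) : ℤ) + ((i+1 : ℕ) : ℤ)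
          = ((n : ℤ) - ((k+1 : ℕ) : ℤ) + (i : ℤ)) + 1 := by
        push_cast; ring
      have he4 : -(((i+1 : ℕ) : ℤ) + 1) = (-((i : ℤ) + 1)) + (-1) := by
        push_cast; ring
      have he5 : -((i : ℤ) + 1) - 1 = (-((i : ℤ) + 1)) + (-1) := by ring
      rw [hG1, hG2]
      simp only []
      rw [if_neg (Nat.succ_ne_zero i), Nat.add_sub_cancel]
      rw [he1, he5, he3, he4]
      rw [he2]
      rw [zpow_add_one₀ hPz, zpow_add₀ hQz, zpow_neg_one]
      simp only [Polynomial.eval_add, Polynomial.eval_mul, Polynomial.eval_smul, smul_eq_mul,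
        Polynomial.eval_neg]
      push_cast
      ring
    calc (∑ i ∈ Finset.range (k+1),
          ((((((n : ℤ) - k + i : ℤ)) : ℂ) * Polynomial.eval z p ^ ((n : ℤ) - k + i - 1) *
              Polynomial.eval z (Polynomial.derivative p) * Polynomial.eval z (auxW n p q k i)
            + Polynomial.eval z p ^ ((n : ℤ) - k + i) *
                Polynomial.eval z (Polynomial.derivative (auxW n p q k i))) *
            Polynomial.eval z q ^ (-((i : ℤ) + 1))
          + Polynomial.eval z p ^ ((n : ℤ) - k + i) * Polynomial.eval z (auxW n p q k i) *
              ((((-((i : ℤ) + 1) : ℤ)) : ℂ) * Polynomial.eval z q ^ (-((i : ℤ) + 1) - 1) *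
                Polynomial.eval z (Polynomial.derivative q))))
        = ∑ i ∈ Finset.range (k+1), (G1 i + G2 (i+1)) := Finset.sum_congr rfl key
      _ = (∑ i ∈ Finset.range (k+1), G1 i) + ∑ i ∈ Finset.range (k+1), G2 (i+1) :=
          Finset.sum_add_distrib
      _ = (∑ i ∈ Finset.range (k+1+1), G1 i) + ∑ i ∈ Finset.range (k+1+1), G2 i := by
          rw [Finset.sum_range_succ G1 (k+1), hG1top, add_zero,
            Finset.sum_range_succ' G2 (k+1), hG2zero, add_zero]
      _ = ∑ i ∈ Finset.range (k+1+1), (G1 i + G2 i) := Finset.sum_add_distrib.symm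
      _ = _ := Finset.sum_congr rfl fun i _ => (hsplitF i).symm

/-- representation of the iterated derivative -/
lemma rep_lemma (n : ℕ) (p : Polynomial ℂ)
    (hp : ∀ z : ℂ, ‖z‖ < 1 → Polynomial.eval z p ≠ 0)
    (r : ℝ) (hr0 : 0 ≤ r) (hr1 : r < 1) (k : ℕ) :
    ∀ z : ℂ, ‖z‖ < 1 →
      iteratedDeriv k (fun w : ℂ => (Polynomial.eval w p) ^ n / Polynomial.eval ((r:ℂ) * w) p) z
        = ∑ i ∈ Finset.range (k+1),
            (Polynomial.eval z p) ^ ((n : ℤ) - k + i) *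
              Polynomial.eval z
                (auxW n p (p.comp (Polynomial.C (r:ℂ) * Polynomial.X)) k i) *
                (Polynomial.eval ((r:ℂ) * z) p) ^ (-((i : ℤ) + 1)) := by
  intro z hz
  set q : Polynomial ℂ := p.comp (Polynomial.C (r:ℂ) * Polynomial.X) with hqdef
  have hq_eval : ∀ w : ℂ, Polynomial.eval w q = Polynomial.eval ((r:ℂ) * w) p := by
    intro w
    rw [hqdef, Polynomial.eval_comp]
    simp
  have hq : ∀ w : ℂ, ‖w‖ < 1 → Polynomial.eval w q ≠ 0 := by
    intro w hw
    rw [hq_eval]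
    apply hp
    rw [norm_mul, Complex.norm_real, Real.norm_eq_abs, abs_of_nonneg hr0]
    calc r * ‖w‖ ≤ 1 * ‖w‖ := by
          apply mul_le_mul_of_nonneg_right (le_of_lt hr1) (norm_nonneg w)
      _ = ‖w‖ := one_mul _
      _ < 1 := hw
  have hfun : (fun w : ℂ => (Polynomial.eval w p) ^ n / Polynomial.eval ((r:ℂ) * w) p)
      = (fun w : ℂ => (Polynomial.eval w p) ^ n / Polynomial.eval w q) := by
    funext w
    rw [hq_eval]
  rw [hfun, rep_lemma_q n p q hp hq k z hz]
  refine Finset.sum_congr rfl fun i _ => ?_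
  rw [hq_eval]

/-- bound for the `auxW` family -/
lemma auxW_good (n m : ℕ) (p q : Polynomial ℂ) (A : ℝ)
    (hp : GoodP A m p) (hp' : GoodP A m (Polynomial.derivative p))
    (hq' : GoodP A m (Polynomial.derivative q)) :
    ∀ k i, GoodP (Wc n m k * A ^ k) (k * m) (auxW n p q k i) := by
  have hA : 0 ≤ A := hp.nonnegA
  intro k
  induction k with
  | zero =>
    intro i
    by_cases h : i = 0
    · subst h
      have : auxW n p q 0 0 = 1 := by simp [auxW]
      rw [this]
      exact GoodP.one.mono (by simp [Wc]) (by simp)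
    · have : auxW n p q 0 i = 0 := by simp [auxW, h]
      rw [this]
      exact GoodP.zero (by simp [Wc]) _
  | succ k ih =>
    intro i
    rcases lt_or_ge (k+1) i with hik | hik
    · rw [auxW_eq_zero n p q (k+1) i hik]
      apply GoodP.zero _ _
      have := Wc_nonneg n m (k+1)
      positivity
    -- now i ≤ k + 1
    set B : ℝ := Wc n m k * A ^ k with hB
    have hB0 : 0 ≤ B := mul_nonneg (Wc_nonneg n m k) (by positivity)
    set M : ℝ := (((k+1)*m+1 : ℕ) : ℝ) with hM
    set AB : ℝ := M * (A * B) with hAB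
    have hAB0 : 0 ≤ AB := by
      apply mul_nonneg _ (mul_nonneg hA hB0)
      rw [hM]; positivity
    -- term 1
    have hc : ‖(((n : ℤ) - (k : ℤ) + (i : ℤ)) : ℂ)‖ ≤ (3*(n+k+1) : ℝ) := by
      have e : (((n : ℤ) : ℂ) - ((k : ℤ) : ℂ) + ((i : ℤ) : ℂ))
          = ((((n : ℤ) - (k : ℤ) + (i : ℤ)) : ℤ) : ℂ) := by push_cast; ring
      rw [show (((n : ℤ) - (k : ℤ) + (i : ℤ)) : ℂ)
        = ((((n : ℤ) - (k : ℤ) + (i : ℤ)) : ℤ) : ℂ) from e, Complex.norm_intCast]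
      have h1 : |((n : ℤ) - (k : ℤ) + (i : ℤ))| ≤ (3*(n+k+1) : ℤ) := by
        rw [abs_le]; omega
      rw [← Int.cast_abs]
      exact_mod_cast h1
    have t1 : GoodP ((3*(n+k+1) : ℝ) * AB) ((k+1)*m)
        ((((n : ℤ) - (k : ℤ) + (i : ℤ)) : ℂ) • (Polynomial.derivative p * auxW n p q k i)) := by
      apply ((hp'.mul (ih i)).smul _).mono _ (le_of_eq (by ring))
      refine le_trans (mul_le_mul_of_nonneg_right hc
        (mul_nonneg (by positivity) (mul_nonneg hA hB0))) (le_of_eq ?_)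
      rw [hAB, hM]; push_cast; ring
    -- term 2
    have t2 : GoodP ((k*m : ℝ) * AB) ((k+1)*m)
        (p * Polynomial.derivative (auxW n p q k i)) := by
      apply (hp.mul (ih i).deriv).mono (le_of_eq _) (le_of_eq (by ring))
      rw [hAB, hM]; push_cast; ring
    -- term 3
    have t3 : GoodP (((k:ℝ)+1) * AB) ((k+1)*m)
        (if i = 0 then 0 else (-(i : ℂ)) • (auxW n p q k (i - 1) * Polynomial.derivative q)) := by
      by_cases h : i = 0
      · rw [if_pos h]
        apply GoodP.zero _ _
        positivity
      · rw [if_neg h]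
        apply (((ih (i-1)).mul hq').smul _).mono _ (le_of_eq (by ring))
        have hni : ‖(-(i:ℂ))‖ = (i:ℝ) := by
          rw [norm_neg, Complex.norm_natCast]
        rw [hni]
        refine le_trans (mul_le_mul_of_nonneg_right
          (show (i:ℝ) ≤ (k:ℝ)+1 by exact_mod_cast hik)
          (mul_nonneg (by positivity) (mul_nonneg hB0 hA))) (le_of_eq ?_)
        rw [hAB, hM]; push_cast; ring
    have hsum := (t1.add t2).add t3
    have hW : auxW n p q (k+1) i
        = (((n : ℤ) - (k : ℤ) + (i : ℤ)) : ℂ) • (Polynomial.derivative p * auxW n p q k i)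
          + p * Polynomial.derivative (auxW n p q k i)
          + (if i = 0 then 0 else (-(i : ℂ)) • (auxW n p q k (i - 1) * Polynomial.derivative q)) := by
      simp [auxW]
    rw [hW]
    apply hsum.mono (le_of_eq _) (by simp)
    have hWc : Wc n m (k+1)
        = (((3*(n+k+1) + k*m + (k+1)) * ((k+1)*m+1) : ℕ) : ℝ) * Wc n m k := rfl
    rw [hWc, hAB, hM, hB]
    push_cast
    ring

theorem stmt16 (n m : ℕ) :
    ∃ c : ℝ, 0 < c ∧ ∀ p : Polynomial ℂ, p.natDegree ≤ m →
      (∀ z : ℂ, ‖z‖ < 1 → Polynomial.eval z p ≠ 0) →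
      ∀ r : ℝ, 0 ≤ r → r < 1 → ∀ k : ℕ, k < n → ∀ z : ℂ, ‖z‖ < 1 →
        ‖iteratedDeriv k
            (fun w : ℂ => (Polynomial.eval w p) ^ n / Polynomial.eval ((r : ℂ) * w) p) z‖ ≤
          c * ‖Polynomial.eval 0 p‖ ^ (n - 1) := by
  classical
  set CC : ℕ → ℝ := fun j =>
    (2*(4:ℝ)^m)^n * ((2:ℝ)^m)^(j+1) * 2 * Wc n m j * (((m:ℝ)+1)*(4:ℝ)^m)^j with hCC
  have hCC0 : ∀ j, 0 ≤ CC j := by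
    intro j
    have := Wc_nonneg n m j
    rw [hCC]
    positivity
  set c : ℝ := 1 + ∑ j ∈ Finset.range n, ((j:ℝ)+1) * CC j with hc
  have hsum0 : 0 ≤ ∑ j ∈ Finset.range n, ((j:ℝ)+1) * CC j := by
    apply Finset.sum_nonneg
    intro j _
    have := hCC0 j
    positivity
  refine ⟨c, by rw [hc]; linarith, ?_⟩
  intro p hdeg hp r hr0 hr1 k hk z hz
  have hp0 : Polynomial.eval 0 p ≠ 0 := hp 0 (by simp)
  set P0 : ℝ := ‖Polynomial.eval 0 p‖ with hP0def
  have hP0 : 0 < P0 := norm_pos_iff.mpr hp0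
  set q : Polynomial ℂ := p.comp (Polynomial.C (r:ℂ) * Polynomial.X) with hqdef
  -- GoodP facts
  have hpg : GoodP ((4:ℝ)^m * P0) m p := by
    refine ⟨hdeg, fun i => ?_⟩
    rcases le_or_gt i m with h | h
    · have h1 : ‖p.coeff i‖ ≤ 2^m * P0 := coeff_bound hdeg hp i
      refine le_trans h1 ?_
      rw [le_div_iff₀ (by positivity : (0:ℝ) < 2^i)]
      have h2 : (2:ℝ)^i ≤ 2^m := pow_le_pow_right₀ (by norm_num) h
      have h4 : (4:ℝ)^m = 2^m * 2^m := by
        rw [← mul_pow]; norm_num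
      rw [h4]
      calc (2:ℝ)^m * P0 * 2^i = (2:ℝ)^m * (2^i * P0) := by ring
        _ ≤ (2:ℝ)^m * (2^m * P0) := by gcongr
        _ = (2:ℝ)^m * 2^m * P0 := by ring
    · rw [Polynomial.coeff_eq_zero_of_natDegree_lt (lt_of_le_of_lt hdeg h), norm_zero]
      positivity
  have hqdeg : q.natDegree ≤ m := by
    rw [hqdef]
    refine le_trans (Polynomial.natDegree_comp_le) ?_
    have h1 : (Polynomial.C (r:ℂ) * Polynomial.X).natDegree ≤ 1 := by
      refine le_trans (Polynomial.natDegree_C_mul_le _ _) ?_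
      simp [Polynomial.natDegree_X]
    calc p.natDegree * (Polynomial.C (r:ℂ) * Polynomial.X).natDegree
        ≤ p.natDegree * 1 := Nat.mul_le_mul_left _ h1
      _ = p.natDegree := Nat.mul_one _
      _ ≤ m := hdeg
  have hqg : GoodP ((4:ℝ)^m * P0) m q := by
    refine ⟨hqdeg, fun i => ?_⟩
    rw [hqdef, coeff_comp_linear, norm_mul]
    have h1 : ‖((r:ℂ))^i‖ ≤ 1 := by
      rw [norm_pow, Complex.norm_real, Real.norm_eq_abs, abs_of_nonneg hr0]
      exact pow_le_one₀ hr0 (le_of_lt hr1)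
    have h2 := hpg.2 i
    calc ‖p.coeff i‖ * ‖((r:ℂ))^i‖ ≤ ‖p.coeff i‖ * 1 :=
          mul_le_mul_of_nonneg_left h1 (norm_nonneg _)
      _ = ‖p.coeff i‖ := mul_one _
      _ ≤ (4:ℝ)^m * P0 / 2^i := h2
  set A : ℝ := ((m:ℝ)+1) * ((4:ℝ)^m * P0) with hA
  have hA0 : 0 ≤ A := by rw [hA]; positivity
  have hle : (4:ℝ)^m * P0 ≤ A := by
    rw [hA]
    nlinarith [mul_pos (pow_pos (by norm_num : (0:ℝ) < 4) m) hP0]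
  have hmle : (m:ℝ) * ((4:ℝ)^m * P0) ≤ A := by
    rw [hA]
    nlinarith [mul_pos (pow_pos (by norm_num : (0:ℝ) < 4) m) hP0]
  have hp2 : GoodP A m p := hpg.mono hle le_rfl
  have hp' : GoodP A m (Polynomial.derivative p) := (hpg.deriv).mono hmle le_rfl
  have hq' : GoodP A m (Polynomial.derivative q) := (hqg.deriv).mono hmle le_rfl
  have hWg := auxW_good n m p q A hp2 hp' hq'
  -- rewrite using the representation
  rw [rep_lemma n p hp r hr0 hr1 k z hz]
  -- pointwise facts
  have hz1 : ‖z‖ ≤ 1 := le_of_lt hz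
  have hrz : ‖(r:ℂ) * z‖ < 1 := by
    rw [norm_mul, Complex.norm_real, Real.norm_eq_abs, abs_of_nonneg hr0]
    calc r * ‖z‖ ≤ 1 * ‖z‖ := mul_le_mul_of_nonneg_right (le_of_lt hr1) (norm_nonneg z)
      _ = ‖z‖ := one_mul _
      _ < 1 := hz
  have hbz : (0:ℝ) < ‖Polynomial.eval ((r:ℂ) * z) p‖ := norm_pos_iff.mpr (hp _ hrz)
  have haz : ‖Polynomial.eval z p‖ ≤ 2 * ((4:ℝ)^m * P0) := hpg.eval_le hz1
  have hratio : ‖Polynomial.eval z p‖ ≤ 2^m * ‖Polynomial.eval ((r:ℂ) * z) p‖ :=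
    ratio_bound hdeg hp hr0 hr1 hz
  -- per-term bound
  have hterm : ∀ i ∈ Finset.range (k+1),
      ‖(Polynomial.eval z p) ^ ((n : ℤ) - k + i) * Polynomial.eval z (auxW n p q k i) *
        (Polynomial.eval ((r:ℂ) * z) p) ^ (-((i : ℤ) + 1))‖ ≤ CC k * P0 ^ (n-1) := by
    intro i hi
    have hik : i ≤ k := by
      rw [Finset.mem_range] at hi; omega
    rw [norm_mul, norm_mul, norm_zpow, norm_zpow]
    set a : ℝ := ‖Polynomial.eval z p‖ with ha
    set b : ℝ := ‖Polynomial.eval ((r:ℂ) * z) p‖ with hb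
    have ha0 : 0 ≤ a := norm_nonneg _
    have he : (n : ℤ) - k + i = ((n - k - 1 + (i+1) : ℕ) : ℤ) := by
      push_cast
      omega
    have hd : -((i : ℤ) + 1) = -(((i+1 : ℕ)) : ℤ) := by push_cast; ring
    rw [he, hd, zpow_natCast, zpow_neg, zpow_natCast, pow_add]
    have hWev : ‖Polynomial.eval z (auxW n p q k i)‖ ≤ 2 * (Wc n m k * A ^ k) :=
      (hWg k i).eval_le hz1
    have h2 : a^(i+1) * (b^(i+1))⁻¹ ≤ ((2:ℝ)^m)^(i+1) := by
      rw [← div_eq_mul_inv, div_le_iff₀ (by positivity)]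
      calc a^(i+1) ≤ ((2:ℝ)^m * b)^(i+1) := pow_le_pow_left₀ ha0 hratio _
        _ = ((2:ℝ)^m)^(i+1) * b^(i+1) := mul_pow _ _ _
    have h1 : a^(n-k-1) ≤ (2 * ((4:ℝ)^m * P0))^(n-k-1) := pow_le_pow_left₀ ha0 haz _
    have e1 : a ^ (n-k-1) * a^(i+1) * ‖Polynomial.eval z (auxW n p q k i)‖ * (b^(i+1))⁻¹
        = (a^(n-k-1)) * (a^(i+1) * (b^(i+1))⁻¹) * ‖Polynomial.eval z (auxW n p q k i)‖ := by
      ring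
    rw [e1]
    have hbig : (a^(n-k-1)) * (a^(i+1) * (b^(i+1))⁻¹) * ‖Polynomial.eval z (auxW n p q k i)‖
        ≤ ((2 * ((4:ℝ)^m * P0))^(n-k-1)) * (((2:ℝ)^m)^(i+1)) * (2 * (Wc n m k * A ^ k)) := by
      apply mul_le_mul _ hWev (norm_nonneg _) _
      · apply mul_le_mul h1 h2 _ (by positivity)
        apply mul_nonneg (by positivity) (le_of_lt (inv_pos.mpr (by positivity)))
      · apply mul_nonneg (by positivity) (by positivity)
    refine le_trans hbig ?_
    -- now pure constants
    have hWc := Wc_nonneg n m k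
    have hsplit1 : (2 * ((4:ℝ)^m * P0))^(n-k-1) = (2*(4:ℝ)^m)^(n-k-1) * P0^(n-k-1) := by
      rw [show (2 * ((4:ℝ)^m * P0)) = (2*(4:ℝ)^m) * P0 by ring, mul_pow]
    have hsplit2 : A ^ k = (((m:ℝ)+1)*(4:ℝ)^m)^k * P0^k := by
      rw [hA, show ((m:ℝ)+1) * ((4:ℝ)^m * P0) = (((m:ℝ)+1)*(4:ℝ)^m) * P0 by ring, mul_pow]
    rw [hsplit1, hsplit2]
    have hP0pow : P0^(n-k-1) * P0^k = P0^(n-1) := by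
      rw [← pow_add]
      congr 1
      omega
    have hc1 : (2*(4:ℝ)^m)^(n-k-1) ≤ (2*(4:ℝ)^m)^n := by
      apply pow_le_pow_right₀ _ (by omega)
      nlinarith [pow_pos (by norm_num : (0:ℝ) < 4) m, one_le_pow₀ (by norm_num : (1:ℝ) ≤ 4) (n := m)]
    have hc2 : ((2:ℝ)^m)^(i+1) ≤ ((2:ℝ)^m)^(k+1) := by
      apply pow_le_pow_right₀ (one_le_pow₀ (by norm_num)) (by omega)
    calc (2*(4:ℝ)^m)^(n-k-1) * P0^(n-k-1) * ((2:ℝ)^m)^(i+1) *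
          (2 * (Wc n m k * ((((m:ℝ)+1)*(4:ℝ)^m)^k * P0^k)))
        = ((2*(4:ℝ)^m)^(n-k-1) * ((2:ℝ)^m)^(i+1) * 2 * Wc n m k * (((m:ℝ)+1)*(4:ℝ)^m)^k)
            * (P0^(n-k-1) * P0^k) := by ring
      _ ≤ ((2*(4:ℝ)^m)^n * ((2:ℝ)^m)^(k+1) * 2 * Wc n m k * (((m:ℝ)+1)*(4:ℝ)^m)^k)
            * (P0^(n-k-1) * P0^k) := by
          apply mul_le_mul_of_nonneg_right _ (by positivity)
          apply mul_le_mul_of_nonneg_right _ (by positivity)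
          apply mul_le_mul_of_nonneg_right _ hWc
          apply mul_le_mul_of_nonneg_right _ (by norm_num)
          apply mul_le_mul hc1 hc2 (by positivity) (by positivity)
      _ = CC k * P0^(n-1) := by rw [hP0pow, hCC]
  -- sum up
  calc ‖∑ i ∈ Finset.range (k+1),
        (Polynomial.eval z p) ^ ((n : ℤ) - k + i) * Polynomial.eval z (auxW n p q k i) *
          (Polynomial.eval ((r:ℂ) * z) p) ^ (-((i : ℤ) + 1))‖
      ≤ ∑ i ∈ Finset.range (k+1), ‖(Polynomial.eval z p) ^ ((n : ℤ) - k + i) *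
          Polynomial.eval z (auxW n p q k i) *
          (Polynomial.eval ((r:ℂ) * z) p) ^ (-((i : ℤ) + 1))‖ := norm_sum_le _ _
    _ ≤ ∑ i ∈ Finset.range (k+1), CC k * P0 ^ (n-1) := Finset.sum_le_sum hterm
    _ = ((k:ℝ)+1) * (CC k * P0 ^ (n-1)) := by
        rw [Finset.sum_const, Finset.card_range, nsmul_eq_mul]
        push_cast; ring
    _ ≤ c * P0 ^ (n-1) := by
        have hkmem : k ∈ Finset.range n := Finset.mem_range.mpr hk
        have hsingle : ((k:ℝ)+1) * CC k ≤ ∑ j ∈ Finset.range n, ((j:ℝ)+1) * CC j := by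
          apply Finset.single_le_sum _ hkmem
          intro j _
          have := hCC0 j
          positivity
        have hcge : ((k:ℝ)+1) * CC k ≤ c := by
          rw [hc]; linarith
        have hpow : (0:ℝ) ≤ P0 ^ (n-1) := by positivity
        calc ((k:ℝ)+1) * (CC k * P0 ^ (n-1)) = (((k:ℝ)+1) * CC k) * P0 ^ (n-1) := by ring
          _ ≤ c * P0 ^ (n-1) := mul_le_mul_of_nonneg_right hcge hpow
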